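/- Let l : ℝ^p → ℝ be differentiable and let L, S ⊆ {1,…,p} be disjoint sets. If l is M̃-smooth on Ω̃_{|L|+1} with M̃ > 0, then Σ_{j∈S} [l(β^{(L∪{j})}) − l(β^{(L)})] ≥ (1/(2M̃)) · ‖(∇l(β^{(L)}))_S‖₂². -/

import Mathlib

open Finset

noncomputable section

/-- Number of nonzero coordinates (the "ℓ₀ norm") of a vector. -/
def spar {p : ℕ} (v : Fin p → ℝ) : ℕ := (Finset.univ.filter fun i => v i ≠ 0).card

/-- Support of a vector, as a `Finset`. -/
def suppF {p : ℕ} (v : Fin p → ℝ) : Finset (Fin p) :=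
  Finset.univ.filter fun i => v i ≠ 0

/-- `Ω_k`: pairs of `k`-sparse vectors differing in at most `k` coordinates. -/
def Omega {p : ℕ} (k : ℕ) : Set ((Fin p → ℝ) × (Fin p → ℝ)) :=
  {q | spar q.1 ≤ k ∧ spar q.2 ≤ k ∧ spar (q.1 - q.2) ≤ k}

/-- `Ω̃_k`: pairs of `k`-sparse vectors differing in at most one coordinate. -/
def OmegaT {p : ℕ} (k : ℕ) : Set ((Fin p → ℝ) × (Fin p → ℝ)) :=
  {q | spar q.1 ≤ k ∧ spar q.2 ≤ k ∧ spar (q.1 - q.2) ≤ 1}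

/-- `l` is `m`-strongly concave on `Ω`. -/
def RStrongConcaveOn {p : ℕ} (l : (Fin p → ℝ) → ℝ) (m : ℝ)
    (Ω : Set ((Fin p → ℝ) × (Fin p → ℝ))) : Prop :=
  ∀ x y : Fin p → ℝ, (x, y) ∈ Ω →
    l y - l x - fderiv ℝ l x (y - x) ≤ -(m / 2) * ∑ i, (y i - x i) ^ 2

/-- `l` is `M`-smooth on `Ω`. -/
def RSmoothOn {p : ℕ} (l : (Fin p → ℝ) → ℝ) (M : ℝ)
    (Ω : Set ((Fin p → ℝ) × (Fin p → ℝ))) : Prop :=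
  ∀ x y : Fin p → ℝ, (x, y) ∈ Ω →
    -(M / 2) * ∑ i, (y i - x i) ^ 2 ≤ l y - l x - fderiv ℝ l x (y - x)

/-- lower bound on the sum of singleton gains, via smoothness. -/
theorem singleton_gains_lower_bound_of_smoothness
    (p : ℕ) (l : (Fin p → ℝ) → ℝ) (hl : Differentiable ℝ l)
    (β : Finset (Fin p) → (Fin p → ℝ))
    (hβsupp : ∀ S : Finset (Fin p), suppF (β S) ⊆ S)
    (hβmax : ∀ S : Finset (Fin p), ∀ v : Fin p → ℝ, suppF v ⊆ S → l v ≤ l (β S))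
    (L S : Finset (Fin p)) (hLS : Disjoint L S)
    (M : ℝ) (hM : 0 < M)
    (hsmooth : RSmoothOn l M (OmegaT (L.card + 1))) :
    1 / (2 * M) * ∑ j ∈ S, (fderiv ℝ l (β L) (Pi.single j 1)) ^ 2 ≤
      ∑ j ∈ S, (l (β (L ∪ {j})) - l (β L)) := by
  rw [Finset.mul_sum]
  apply Finset.sum_le_sum
  intro j hj
  have hjL : j ∉ L := fun h => (Finset.disjoint_left.mp hLS h) hj
  set x := β L with hx
  set g : ℝ := fderiv ℝ l x (Pi.single j 1) with hg
  set t : ℝ := g / M with ht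
  set y : Fin p → ℝ := x + t • (Pi.single j 1 : Fin p → ℝ) with hy
  have hdiff : y - x = t • (Pi.single j 1 : Fin p → ℝ) := by
    funext i; simp [hy]
  have hxj : x j = 0 := by
    by_contra h
    exact hjL (hβsupp L (by simp [suppF]; exact h))
  -- support of y
  have hsuppy : suppF y ⊆ insert j L := by
    intro i hi
    simp only [suppF, Finset.mem_filter, Finset.mem_univ, true_and] at hi
    rcases eq_or_ne i j with rfl | hij
    · exact Finset.mem_insert_self _ _
    · apply Finset.mem_insert_of_mem
      apply hβsupp L
      simp only [suppF, Finset.mem_filter, Finset.mem_univ, true_and]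
      intro h0
      apply hi
      simp [hy, Pi.single_apply, hij]; exact h0
  have hsparx : spar x ≤ L.card := Finset.card_le_card (hβsupp L)
  have hmem : (x, y) ∈ OmegaT (p := p) (L.card + 1) := by
    refine ⟨hsparx.trans (Nat.le_succ _), ?_, ?_⟩
    · calc spar y ≤ (insert j L).card := Finset.card_le_card hsuppy
        _ ≤ L.card + 1 := Finset.card_insert_le _ _
    · have : suppF (x - y) ⊆ {j} := by
        intro i hi
        simp only [suppF, Finset.mem_filter, Finset.mem_univ, true_and] at hi
        rcases eq_or_ne i j with rfl | hij
        · exact Finset.mem_singleton_self _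
        · exact absurd (by simp [hy, Pi.single_apply, hij]) hi
      calc spar (x - y) ≤ ({j} : Finset (Fin p)).card := Finset.card_le_card this
        _ = 1 := Finset.card_singleton _
  have hsm := hsmooth x y hmem
  -- compute sum of squares
  have hsum : ∑ i, (y i - x i) ^ 2 = t ^ 2 := by
    have : ∀ i, (y i - x i) ^ 2 = t ^ 2 * ((Pi.single j 1 : Fin p → ℝ) i) ^ 2 := by
      intro i; simp [hy]; ring
    rw [Finset.sum_congr rfl (fun i _ => this i), ← Finset.mul_sum]
    rw [Finset.sum_eq_single j (fun i _ hij => by simp [Pi.single_apply, hij])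
      (fun h => absurd (Finset.mem_univ j) h)]
    simp
  -- compute fderiv term
  have hfd : fderiv ℝ l x (y - x) = t * g := by
    rw [hdiff, map_smul, smul_eq_mul, hg]
  rw [hsum, hfd] at hsm
  -- l y ≤ l (β (L ∪ {j}))
  have hymax : l y ≤ l (β (L ∪ {j})) := by
    apply hβmax
    refine hsuppy.trans ?_
    intro i hi
    rcases Finset.mem_insert.mp hi with rfl | h
    · exact Finset.mem_union_right _ (Finset.mem_singleton_self _)
    · exact Finset.mem_union_left _ h
  have hMne : M ≠ 0 := ne_of_gt hM
  have h1 : l y - l x ≥ g ^ 2 / (2 * M) := by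
    have : t * g - M / 2 * t ^ 2 = g ^ 2 / (2 * M) := by
      rw [ht]; field_simp; ring
    nlinarith [hsm]
  calc 1 / (2 * M) * g ^ 2 = g ^ 2 / (2 * M) := by ring
    _ ≤ l y - l x := h1
    _ ≤ l (β (L ∪ {j})) - l x := by linarith
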